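/- Let D be an oriented knot diagram with n ≥ 1 crossings, modeled by a Gauss code g, and let D' be the diagram obtained from D by a crossing change at a crossing c₀. Then X_{D'}(t) − t · X_D(t) = (1 − t) · B in ℤ[t]. -/
import Mathlib

open Polynomial Finset

section ZModHelpers

variable {N : ℕ} [NeZero N]

lemma zmod_natCast_val (x : ZMod N) : ((x.val : ℕ) : ZMod N) = x :=
  ZMod.natCast_rightInverse x

lemma zmod_val_neg_one (h : 1 ≤ N) : (-1 : ZMod N).val = N - 1 := by
  have h2 : ((N - 1 : ℕ) : ZMod N) = -1 := by
    have hN : ((N : ℕ) : ZMod N) = 0 := ZMod.natCast_self N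
    rw [Nat.cast_sub h, hN, Nat.cast_one, zero_sub]
  rw [← h2, ZMod.val_cast_of_lt (by omega)]

lemma zmod_val_lt_of_ne_neg_one {y : ZMod N} (h : y ≠ -1) : y.val < N - 1 := by
  have h1 : y.val < N := ZMod.val_lt y
  have h2 : y.val ≠ N - 1 := by
    intro he
    apply h
    rw [← zmod_natCast_val y, he, Nat.cast_sub (Nat.one_le_iff_ne_zero.mpr (NeZero.ne N)),
      ZMod.natCast_self, Nat.cast_one, zero_sub]
  omega

lemma zmod_val_sub_succ (x e : ZMod N) (h : x ≠ e) :
    (x - (e + 1)).val + 1 = (x - e).val := by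
  have h0 : x - e ≠ 0 := sub_ne_zero.mpr h
  have h1 : 1 ≤ (x - e).val := Nat.one_le_iff_ne_zero.mpr (fun hv => h0 ((ZMod.val_eq_zero _).mp hv))
  have h2 : x - (e + 1) = (((x - e).val - 1 : ℕ) : ZMod N) := by
    rw [Nat.cast_sub h1, zmod_natCast_val, Nat.cast_one]
    ring
  rw [h2, ZMod.val_cast_of_lt (by have := ZMod.val_lt (x - e); omega)]
  omega

lemma zmod_val_sub_self (x : ZMod N) : (x - x).val = 0 := by
  rw [sub_self, ZMod.val_zero]

lemma zmod_val_sub_pos {x y : ZMod N} (h : x ≠ y) : 0 < (x - y).val :=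
  Nat.pos_of_ne_zero (fun hv => h (sub_eq_zero.mp ((ZMod.val_eq_zero _).mp hv)))

end ZModHelpers
open Polynomial Finset

/-- An oriented knot diagram with `n` crossings, modeled by its oriented Gauss code. -/
structure GaussCode (n : ℕ) where
  g : ZMod (2 * n) → Fin n × Bool
  o : Fin n → ZMod (2 * n)
  u : Fin n → ZMod (2 * n)
  over_iff : ∀ (c : Fin n) (e : ZMod (2 * n)), g e = (c, true) ↔ e = o c
  under_iff : ∀ (c : Fin n) (e : ZMod (2 * n)), g e = (c, false) ↔ e = u c

namespace GaussCode

variable {n : ℕ}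

/-- The warping degree of the base position `e`: the number of crossings whose
under-passage occurs strictly before its over-passage when traversing the diagram
starting at `e`. -/
def d (D : GaussCode n) (e : ZMod (2 * n)) : ℕ :=
  (Finset.univ.filter fun c : Fin n => (D.u c - e).val < (D.o c - e).val).card

/-- The warping crossing polynomial. -/
noncomputable def Xpoly (D : GaussCode n) : Polynomial ℤ :=
  ∑ c : Fin n, Polynomial.X ^ D.d (D.o c)

/-- The warping polynomial. -/
noncomputable def Wpoly (D : GaussCode n) : Polynomial ℤ :=
  ∑ k ∈ Finset.range (2 * n), Polynomial.X ^ D.d (k : ZMod (2 * n))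

/-- The warping degree of the diagram: minimum over all base positions. -/
noncomputable def wdeg (D : GaussCode n) : ℕ :=
  sInf (Set.range fun e : ZMod (2 * n) => D.d e)

/-- The diagram is alternating. -/
def Alternating (D : GaussCode n) : Prop :=
  ∀ e : ZMod (2 * n), (D.g e).2 ≠ (D.g (e + 1)).2

end GaussCode


namespace GaussCode

variable {n : ℕ} (D : GaussCode n)

lemma g_o (c : Fin n) : D.g (D.o c) = (c, true) := (D.over_iff c _).mpr rfl

lemma g_u (c : Fin n) : D.g (D.u c) = (c, false) := (D.under_iff c _).mpr rfl

lemma o_ne_u (c c' : Fin n) : D.o c ≠ D.u c' := by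
  intro h
  have h1 := D.g_o c
  rw [h, D.g_u] at h1
  simpa using h1

lemma o_inj {c c' : Fin n} (h : D.o c = D.o c') : c = c' := by
  have h1 := D.g_o c
  rw [h, D.g_o] at h1
  simpa [Prod.ext_iff] using h1.symm

lemma u_inj {c c' : Fin n} (h : D.u c = D.u c') : c = c' := by
  have h1 := D.g_u c
  rw [h, D.g_u] at h1
  simpa [Prod.ext_iff] using h1.symm

lemma pos_cases (e : ZMod (2 * n)) : ∃ c : Fin n, e = D.o c ∨ e = D.u c := by
  refine ⟨(D.g e).1, ?_⟩
  rcases hb : (D.g e).2 with _ | _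
  · right
    exact (D.under_iff (D.g e).1 e).mp (by rw [← hb])
  · left
    exact (D.over_iff (D.g e).1 e).mp (by rw [← hb])




lemma d_step_over (hn : 1 ≤ n) (a : Fin n) :
    D.d (D.o a + 1) = D.d (D.o a) + 1 := by
  haveI : NeZero (2 * n) := ⟨by omega⟩
  set e := D.o a with he
  have hset : (Finset.univ.filter fun c : Fin n => (D.u c - (e + 1)).val < (D.o c - (e + 1)).val)
      = insert a (Finset.univ.filter fun c : Fin n => (D.u c - e).val < (D.o c - e).val) := by
    ext c
    by_cases hc : c = a
    · subst hc
      simp only [Finset.mem_insert, Finset.mem_filter, Finset.mem_univ, true_and, true_or,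
        iff_true]
      have h1 : D.o c - (e + 1) = -1 := by rw [← he]; ring
      have h2 : D.u c - (e + 1) ≠ -1 := by
        intro h
        apply D.o_ne_u c c
        have : D.u c = e := by linear_combination h - h1
        rw [← he, this]
      rw [h1, zmod_val_neg_one (by omega)]
      have := zmod_val_lt_of_ne_neg_one h2
      omega
    · have hu : D.u c ≠ e := fun h => D.o_ne_u a c (h.trans he).symm
      have ho : D.o c ≠ e := fun h => hc (D.o_inj (h.trans he))
      simp only [Finset.mem_insert, Finset.mem_filter, Finset.mem_univ, true_and, hc,
        false_or]
      rw [← zmod_val_sub_succ (D.u c) e hu, ← zmod_val_sub_succ (D.o c) e ho]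
      omega
  have hna : a ∉ (Finset.univ.filter fun c : Fin n => (D.u c - e).val < (D.o c - e).val) := by
    simp [he, zmod_val_sub_self]
  rw [d, hset, Finset.card_insert_of_notMem hna, d]

lemma d_step_under (hn : 1 ≤ n) (a : Fin n) :
    D.d (D.u a) = D.d (D.u a + 1) + 1 := by
  haveI : NeZero (2 * n) := ⟨by omega⟩
  set e := D.u a with he
  have hset : (Finset.univ.filter fun c : Fin n => (D.u c - e).val < (D.o c - e).val)
      = insert a (Finset.univ.filter fun c : Fin n =>
          (D.u c - (e + 1)).val < (D.o c - (e + 1)).val) := by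
    ext c
    by_cases hc : c = a
    · subst hc
      simp only [Finset.mem_insert, Finset.mem_filter, Finset.mem_univ, true_and, true_or,
        iff_true]
      rw [he, zmod_val_sub_self]
      exact zmod_val_sub_pos (D.o_ne_u c c)
    · have hu : D.u c ≠ e := fun h => hc (D.u_inj (h.trans he))
      have ho : D.o c ≠ e := fun h => D.o_ne_u c a (h.trans he)
      simp only [Finset.mem_insert, Finset.mem_filter, Finset.mem_univ, true_and, hc,
        false_or]
      rw [← zmod_val_sub_succ (D.u c) e hu, ← zmod_val_sub_succ (D.o c) e ho]
      omega
  have hna : a ∉ (Finset.univ.filter fun c : Fin n =>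
      (D.u c - (e + 1)).val < (D.o c - (e + 1)).val) := by
    simp only [Finset.mem_filter, Finset.mem_univ, true_and, not_lt]
    have h1 : D.u a - (e + 1) = -1 := by rw [← he]; ring
    rw [h1, zmod_val_neg_one (by omega)]
    have := ZMod.val_lt (D.o a - (e + 1))
    omega
  rw [d, hset, Finset.card_insert_of_notMem hna, d]

lemma Xpoly_eq_posSum [NeZero (2 * n)] (D : GaussCode n) :
    D.Xpoly = ∑ e : ZMod (2 * n), if (D.g e).2 = true then (X : Polynomial ℤ) ^ D.d e else 0 := by
  rw [Xpoly, eq_comm, ← Finset.sum_filter]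
  refine Finset.sum_nbij' (fun e => (D.g e).1) D.o ?_ ?_ ?_ ?_ ?_
  · intro e _; exact Finset.mem_univ _
  · intro c _
    simp only [Finset.mem_filter, Finset.mem_univ, true_and, D.g_o c]
  · intro e he
    simp only [Finset.mem_filter, Finset.mem_univ, true_and] at he
    have : D.g e = ((D.g e).1, true) := by
      rw [← he]
    exact ((D.over_iff (D.g e).1 e).mp this).symm
  · intro c _
    show (D.g (D.o c)).1 = c
    rw [D.g_o c]
  · intro e he
    simp only [Finset.mem_filter, Finset.mem_univ, true_and] at he
    have h4 : D.g e = ((D.g e).1, true) := by rw [← he]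
    rw [← (D.over_iff (D.g e).1 e).mp h4]

end GaussCode

lemma sum_range_zmod {n : ℕ} [NeZero (2 * n)] {M : Type*} [AddCommMonoid M]
    (f : ZMod (2 * n) → M) :
    ∑ k ∈ Finset.range (2 * n), f (k : ZMod (2 * n)) = ∑ e : ZMod (2 * n), f e := by
  refine Finset.sum_nbij' (fun k => (k : ZMod (2 * n))) ZMod.val ?_ ?_ ?_ ?_ ?_
  · intro k _; exact Finset.mem_univ _
  · intro e _; exact Finset.mem_range.mpr (ZMod.val_lt e)
  · intro k hk; exact ZMod.val_cast_of_lt (Finset.mem_range.mp hk)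
  · intro e _; exact zmod_natCast_val e
  · intro k _; rfl


/-- Crossing change formula: `X_{D'}(t) − t⬝X_D(t) = (1 − t)⬝B`, where `B` is the sum of
`t^(d e − 1)` over the edges from the over-crossing of `c₀` to the under-crossing of `c₀`. -/
theorem crossing_change_B
    (n : ℕ) (hn : 1 ≤ n) (D D' : GaussCode n) (c₀ : Fin n)
    (h1 : D'.g (D.o c₀) = (c₀, false))
    (h2 : D'.g (D.u c₀) = (c₀, true))
    (h3 : ∀ e : ZMod (2 * n), e ≠ D.o c₀ → e ≠ D.u c₀ → D'.g e = D.g e) :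
    D'.Xpoly - Polynomial.X * D.Xpoly
      = (1 - Polynomial.X) *
          ∑ k ∈ Finset.range (2 * n),
            if (D.u c₀ - (k : ZMod (2 * n))).val < (D.o c₀ - (k : ZMod (2 * n))).val
            then (Polynomial.X : Polynomial ℤ) ^ (D.d (k : ZMod (2 * n)) - 1) else 0 := by
  haveI : NeZero (2 * n) := ⟨by omega⟩
  have hou : D.o c₀ ≠ D.u c₀ := D.o_ne_u c₀ c₀
  -- crossing data of `D'`
  have ho' : D'.o c₀ = D.u c₀ := ((D'.over_iff c₀ _).mp h2).symm
  have hu' : D'.u c₀ = D.o c₀ := ((D'.under_iff c₀ _).mp h1).symm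
  have hoc : ∀ c : Fin n, c ≠ c₀ → D'.o c = D.o c := by
    intro c hc
    have h4 : D'.g (D.o c) = (c, true) := by
      rw [h3 _ (fun h => hc (D.o_inj h)) (D.o_ne_u c c₀)]
      exact D.g_o c
    exact ((D'.over_iff c _).mp h4).symm
  have huc : ∀ c : Fin n, c ≠ c₀ → D'.u c = D.u c := by
    intro c hc
    have h4 : D'.g (D.u c) = (c, false) := by
      rw [h3 _ (fun h => D.o_ne_u c₀ c h.symm) (fun h => hc (D.u_inj h))]
      exact D.g_u c
    exact ((D'.under_iff c _).mp h4).symm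
  -- the warping degree condition `P e` is positivity of `D.d e`
  have hd1 : ∀ e : ZMod (2 * n),
      (D.u c₀ - e).val < (D.o c₀ - e).val → 1 ≤ D.d e := by
    intro e hP
    rw [GaussCode.d]
    exact Finset.card_pos.mpr ⟨c₀, by simp [hP]⟩
  -- relation between `D'.d` and `D.d`
  have hdd : ∀ e : ZMod (2 * n),
      ((D.u c₀ - e).val < (D.o c₀ - e).val → D'.d e + 1 = D.d e) ∧
      (¬ (D.u c₀ - e).val < (D.o c₀ - e).val → D'.d e = D.d e + 1) := by
    intro e
    have hdiff : (D.o c₀ - e).val ≠ (D.u c₀ - e).val := by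
      intro h
      exact hou (by linear_combination (ZMod.val_injective (2 * n) h : D.o c₀ - e = D.u c₀ - e))
    by_cases hP : (D.u c₀ - e).val < (D.o c₀ - e).val
    · refine ⟨fun _ => ?_, fun h => absurd hP h⟩
      have hmem : c₀ ∈ Finset.univ.filter
          (fun c : Fin n => (D.u c - e).val < (D.o c - e).val) := by simp [hP]
      have hset : (Finset.univ.filter fun c : Fin n => (D'.u c - e).val < (D'.o c - e).val)
          = (Finset.univ.filter fun c : Fin n =>
              (D.u c - e).val < (D.o c - e).val).erase c₀ := by
        ext c
        by_cases hc : c = c₀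
        · subst hc
          simp only [Finset.mem_filter, Finset.mem_univ, true_and, Finset.mem_erase, ne_eq,
            not_true_eq_false, false_and, iff_false, not_lt, hu', ho']
          omega
        · simp [hc, hoc c hc, huc c hc]
      have hpos := hd1 e hP
      have h5 : D'.d e = (Finset.univ.filter fun c : Fin n =>
          (D.u c - e).val < (D.o c - e).val).card - 1 := by
        rw [GaussCode.d, hset, Finset.card_erase_of_mem hmem]
      have h6 : D.d e = (Finset.univ.filter fun c : Fin n =>
          (D.u c - e).val < (D.o c - e).val).card := rfl
      omega
    · refine ⟨fun h => absurd h hP, fun _ => ?_⟩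
      have hmem : c₀ ∉ Finset.univ.filter
          (fun c : Fin n => (D.u c - e).val < (D.o c - e).val) := by simp [hP]
      have hset : (Finset.univ.filter fun c : Fin n => (D'.u c - e).val < (D'.o c - e).val)
          = insert c₀ (Finset.univ.filter fun c : Fin n =>
              (D.u c - e).val < (D.o c - e).val) := by
        ext c
        by_cases hc : c = c₀
        · subst hc
          simp only [Finset.mem_insert, true_or, iff_true, Finset.mem_filter, Finset.mem_univ,
            true_and, hu', ho']
          omega
        · simp [hc, hoc c hc, huc c hc]
      rw [GaussCode.d, GaussCode.d, hset, Finset.card_insert_of_notMem hmem]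
  -- behaviour of the condition along the circle
  have hPu : (D.u c₀ - D.u c₀).val < (D.o c₀ - D.u c₀).val := by
    rw [zmod_val_sub_self]
    exact zmod_val_sub_pos hou
  have hPo : ¬ (D.u c₀ - D.o c₀).val < (D.o c₀ - D.o c₀).val := by
    rw [zmod_val_sub_self]
    omega
  have hPou : (D.u c₀ - (D.o c₀ + 1)).val < (D.o c₀ - (D.o c₀ + 1)).val := by
    have h1' : D.o c₀ - (D.o c₀ + 1) = -1 := by ring
    have h2' : D.u c₀ - (D.o c₀ + 1) ≠ -1 := by
      intro h
      exact hou (by linear_combination h1' - h)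
    rw [h1', zmod_val_neg_one (by omega)]
    have := zmod_val_lt_of_ne_neg_one h2'
    omega
  have hPuo : ¬ (D.u c₀ - (D.u c₀ + 1)).val < (D.o c₀ - (D.u c₀ + 1)).val := by
    have h1' : D.u c₀ - (D.u c₀ + 1) = -1 := by ring
    rw [h1', zmod_val_neg_one (by omega)]
    have := ZMod.val_lt (D.o c₀ - (D.u c₀ + 1))
    omega
  have hPstep : ∀ e : ZMod (2 * n), e ≠ D.o c₀ → e ≠ D.u c₀ →
      ((D.u c₀ - (e + 1)).val < (D.o c₀ - (e + 1)).val ↔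
        (D.u c₀ - e).val < (D.o c₀ - e).val) := by
    intro e heo heu
    rw [← zmod_val_sub_succ (D.u c₀) e (fun h => heu h.symm),
      ← zmod_val_sub_succ (D.o c₀) e (fun h => heo h.symm)]
    omega
  -- the telescoping function
  set F : ZMod (2 * n) → Polynomial ℤ := fun e =>
    if (D.u c₀ - e).val < (D.o c₀ - e).val then -(X ^ D.d e) else 0 with hF
  -- the pointwise identity
  have key : ∀ e : ZMod (2 * n),
      ((if (D'.g e).2 = true then (X : Polynomial ℤ) ^ D'.d e else 0)
        - X * (if (D.g e).2 = true then (X : Polynomial ℤ) ^ D.d e else 0)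
        - (1 - X) * (if (D.u c₀ - e).val < (D.o c₀ - e).val
            then (X : Polynomial ℤ) ^ (D.d e - 1) else 0))
      = F (e + 1) - F e := by
    intro e
    obtain ⟨a, he | he⟩ := D.pos_cases e
    · -- `e` is the over-passage of `a`
      have hge : D.g e = (a, true) := (D.over_iff a e).mpr he
      have hstep : D.d (e + 1) = D.d e + 1 := by rw [he]; exact D.d_step_over hn a
      by_cases hac : a = c₀
      · -- `e = D.o c₀`
        rw [hac] at he hge
        have hg' : (D'.g e).2 = false := by rw [he, h1]
        have hcondE : ¬ (D.u c₀ - e).val < (D.o c₀ - e).val := by rw [he]; exact hPo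
        have hcondE1 : (D.u c₀ - (e + 1)).val < (D.o c₀ - (e + 1)).val := by rw [he]; exact hPou
        simp only [hF, hg', hge, Bool.false_eq_true, if_false, if_true]
        rw [if_neg hcondE, if_pos hcondE1, if_neg hcondE, hstep]
        ring
      · -- `e = D.o a`, `a ≠ c₀`
        have heo : e ≠ D.o c₀ := fun h => hac (D.o_inj (he.symm.trans h))
        have heu : e ≠ D.u c₀ := by rw [he]; exact D.o_ne_u a c₀
        have hg' : (D'.g e).2 = true := by rw [h3 e heo heu, hge]
        simp only [hF, hg', hge, if_true, hPstep e heo heu]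
        by_cases hP : (D.u c₀ - e).val < (D.o c₀ - e).val
        · obtain ⟨k, hk⟩ : ∃ k, D.d e = k + 1 := ⟨D.d e - 1, by have := hd1 e hP; omega⟩
          have hd' : D'.d e = k := by have := (hdd e).1 hP; omega
          rw [if_pos hP, if_pos hP, if_pos hP, hd', hstep, hk]
          simp only [Nat.add_sub_cancel]
          ring
        · have hd' : D'.d e = D.d e + 1 := (hdd e).2 hP
          rw [if_neg hP, if_neg hP, if_neg hP, hd']
          ring
    · -- `e` is the under-passage of `a`
      have hge : D.g e = (a, false) := (D.under_iff a e).mpr he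
      have hstep : D.d e = D.d (e + 1) + 1 := by rw [he]; exact D.d_step_under hn a
      by_cases hac : a = c₀
      · -- `e = D.u c₀`
        rw [hac] at he hge
        have hg' : (D'.g e).2 = true := by rw [he, h2]
        obtain ⟨k, hk⟩ : ∃ k, D.d e = k + 1 :=
          ⟨D.d e - 1, by have := hd1 e (by rw [he]; exact hPu); omega⟩
        have hd' : D'.d e = k := by
          have := (hdd e).1 (by rw [he]; exact hPu)
          omega
        have hcondE : (D.u c₀ - e).val < (D.o c₀ - e).val := by rw [he]; exact hPu
        have hcondE1 : ¬ (D.u c₀ - (e + 1)).val < (D.o c₀ - (e + 1)).val := by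
          rw [he]; exact hPuo
        simp only [hF, hg', hge, if_true, Bool.false_eq_true, if_false]
        rw [if_pos hcondE, if_neg hcondE1, if_pos hcondE, hd', hk]
        simp only [Nat.add_sub_cancel]
        ring
      · -- `e = D.u a`, `a ≠ c₀`
        have heo : e ≠ D.o c₀ := by rw [he]; exact fun h => D.o_ne_u c₀ a h.symm
        have heu : e ≠ D.u c₀ := fun h => hac (D.u_inj (he.symm.trans h))
        have hg' : (D'.g e).2 = false := by rw [h3 e heo heu, hge]
        simp only [hF, hg', hge, Bool.false_eq_true, if_false, hPstep e heo heu]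
        by_cases hP : (D.u c₀ - e).val < (D.o c₀ - e).val
        · obtain ⟨k, hk⟩ : ∃ k, D.d e = k + 1 := ⟨D.d e - 1, by have := hd1 e hP; omega⟩
          have hde1 : D.d (e + 1) = k := by omega
          rw [if_pos hP, if_pos hP, if_pos hP, hde1, hk]
          simp only [Nat.add_sub_cancel]
          ring
        · rw [if_neg hP, if_neg hP, if_neg hP]
          ring
  -- telescoping
  have htele : ∑ e : ZMod (2 * n), (F (e + 1) - F e) = 0 := by
    rw [Finset.sum_sub_distrib, sub_eq_zero]
    exact Fintype.sum_equiv (Equiv.addRight 1) _ _ (fun e => rfl)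
  -- assemble
  have hRHS : (∑ k ∈ Finset.range (2 * n),
        if (D.u c₀ - (k : ZMod (2 * n))).val < (D.o c₀ - (k : ZMod (2 * n))).val
        then (Polynomial.X : Polynomial ℤ) ^ (D.d (k : ZMod (2 * n)) - 1) else 0)
      = ∑ e : ZMod (2 * n),
          if (D.u c₀ - e).val < (D.o c₀ - e).val
          then (Polynomial.X : Polynomial ℤ) ^ (D.d e - 1) else 0 :=
    sum_range_zmod (n := n) (fun e => if (D.u c₀ - e).val < (D.o c₀ - e).val
      then (Polynomial.X : Polynomial ℤ) ^ (D.d e - 1) else 0)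
  rw [hRHS, D'.Xpoly_eq_posSum, D.Xpoly_eq_posSum]
  have hzero : (∑ e : ZMod (2 * n), if (D'.g e).2 = true then (X : Polynomial ℤ) ^ D'.d e else 0)
      - X * (∑ e : ZMod (2 * n), if (D.g e).2 = true then (X : Polynomial ℤ) ^ D.d e else 0)
      - (1 - X) * (∑ e : ZMod (2 * n), if (D.u c₀ - e).val < (D.o c₀ - e).val
          then (X : Polynomial ℤ) ^ (D.d e - 1) else 0) = 0 := by
    rw [Finset.mul_sum, Finset.mul_sum, ← Finset.sum_sub_distrib, ← Finset.sum_sub_distrib]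
    trans (∑ e : ZMod (2 * n), (F (e + 1) - F e))
    · exact Finset.sum_congr rfl (fun e _ => key e)
    · exact htele
  linear_combination hzero
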